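/- Let Ω ⊂ ℝ^N be a bounded domain with mean convex boundary and let ψ₁ > 0 be a first Dirichlet eigenfunction of −Δ on Ω with eigenvalue λ₁(Ω), normalized with M₁ = max ψ₁, satisfying the gradient bound |∇ψ₁|² ≤ λ₁(Ω)(M₁² − ψ₁²) on cl Ω. Then any maximum point z of ψ₁ satisfies d_Γ(z) ≥ π/(2√(λ₁(Ω))). -/

import Mathlib

open Metric Set
open scoped Classical Topology Filter

noncomputable def laplacian {N : ℕ} (u : EuclideanSpace ℝ (Fin N) → ℝ)
    (x : EuclideanSpace ℝ (Fin N)) : ℝ :=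
  ∑ i : Fin N, fderiv ℝ (fun y => fderiv ℝ u y (EuclideanSpace.single i 1)) x
    (EuclideanSpace.single i 1)

/-- The signed distance to the boundary of `Ω`: positive inside, negative outside. -/
noncomputable def signedDistFrontier {N : ℕ} (Ω : Set (EuclideanSpace ℝ (Fin N)))
    (x : EuclideanSpace ℝ (Fin N)) : ℝ :=
  if x ∈ Ω then infDist x (frontier Ω) else -infDist x (frontier Ω)

/-- `Ω` has a mean convex `C²` boundary: the signed distance function is `C²` near the
boundary, and its Laplacian is nonpositive on the boundary.  (For a `C²` boundary,
`Δ d = -(N-1) M` on `Γ`, where `M` is the mean curvature with respect to the inward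
normal, so this says `M ≥ 0`.) -/
def MeanConvexBoundary {N : ℕ} (Ω : Set (EuclideanSpace ℝ (Fin N))) : Prop :=
  ∃ V : Set (EuclideanSpace ℝ (Fin N)), IsOpen V ∧ frontier Ω ⊆ V ∧
    ContDiffOn ℝ 2 (signedDistFrontier Ω) V ∧
    ∀ y ∈ frontier Ω, laplacian (signedDistFrontier Ω) y ≤ 0

set_option maxHeartbeats 1000000 in
/-- for a bounded domain with mean convex boundary, a positive first
Dirichlet eigenfunction `ψ₁` (with maximum `M₁ = ψ₁ z`) satisfying the gradient bound
`|∇ψ₁|² ≤ λ₁(M₁² − ψ₁²)` has its maximum point `z` at distance at least `π/(2√λ₁)`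
from the boundary. -/
theorem stmt_8 {N : ℕ} (hN : 2 ≤ N) (Ω : Set (EuclideanSpace ℝ (Fin N)))
    (hΩopen : IsOpen Ω) (hΩconn : IsConnected Ω) (hΩbdd : Bornology.IsBounded Ω)
    (hmc : MeanConvexBoundary Ω)
    (ψ : EuclideanSpace ℝ (Fin N) → ℝ) (lam : ℝ) (hlam : 0 < lam)
    (hψ_C1 : ContDiffOn ℝ 1 ψ (closure Ω))
    (hψ_C2 : ContDiffOn ℝ 2 ψ Ω)
    (heig : ∀ x ∈ Ω, laplacian ψ x + lam * ψ x = 0)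
    (hpos : ∀ x ∈ Ω, 0 < ψ x)
    (hbdry : ∀ x ∈ frontier Ω, ψ x = 0)
    (z : EuclideanSpace ℝ (Fin N)) (hz : z ∈ Ω)
    (hzmax : ∀ x ∈ closure Ω, ψ x ≤ ψ z)
    (hgrad : ∀ x ∈ closure Ω, ‖gradient ψ x‖ ^ 2 ≤ lam * ((ψ z) ^ 2 - (ψ x) ^ 2)) :
    infDist z (frontier Ω) ≥ Real.pi / (2 * Real.sqrt lam) := by
  have hM : 0 < ψ z := hpos z hz
  set M := ψ z with hMdef
  -- Ω is not the whole space
  have hΩne_univ : Ω ≠ univ := by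
    intro h
    obtain ⟨r, hr⟩ := hΩbdd.subset_closedBall 0
    have hNpos : 0 < N := by omega
    have hx : EuclideanSpace.single (⟨0, hNpos⟩ : Fin N) (|r| + 1) ∈ Ω := h ▸ mem_univ _
    have h2 := hr hx
    rw [Metric.mem_closedBall, dist_zero_right, EuclideanSpace.norm_single] at h2
    have h3 : |r| + 1 ≤ r := le_trans (le_abs_self _) (by simpa using h2)
    have h4 : r ≤ |r| := le_abs_self r
    linarith
  -- the frontier is nonempty
  have hfne : (frontier Ω).Nonempty := by
    rcases eq_empty_or_nonempty (frontier Ω) with h | h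
    · exfalso
      have hclopen : IsClopen Ω := isClopen_iff_frontier_eq_empty.mpr h
      rcases isClopen_iff.mp hclopen with h' | h'
      · exact absurd (h' ▸ hz) (notMem_empty z)
      · exact hΩne_univ h'
    · exact h
  -- the frontier is compact, choose a closest point y
  have hfc : IsCompact (frontier Ω) :=
    Metric.isCompact_iff_isClosed_bounded.mpr
      ⟨isClosed_frontier, hΩbdd.closure.subset frontier_subset_closure⟩
  obtain ⟨y, hyF, hdy⟩ := hfc.exists_infDist_eq_dist hfne z
  set d := infDist z (frontier Ω) with hddef
  have hzF : z ∉ frontier Ω := by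
    rw [hΩopen.frontier_eq]
    exact fun hf => hf.2 hz
  have hzy : z ≠ y := fun h => hzF (h ▸ hyF)
  have hd0 : 0 < d := by rw [hdy]; exact dist_pos.mpr hzy
  -- the open ball of radius d around z is contained in Ω
  have hball : ball z d ⊆ Ω := by
    have hcov : ball z d ⊆ Ω ∪ (closure Ω)ᶜ := by
      intro x hx
      by_cases hxΩ : x ∈ Ω
      · exact Or.inl hxΩ
      · by_cases hxc : x ∈ closure Ω
        · exfalso
          have hxf : x ∈ frontier Ω := by
            rw [hΩopen.frontier_eq]; exact ⟨hxc, hxΩ⟩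
          have h1 : d ≤ dist z x := infDist_le_dist_of_mem hxf
          have h2 : dist z x < d := by rw [dist_comm]; exact mem_ball.mp hx
          linarith
        · exact Or.inr hxc
    exact (convex_ball z d).isPreconnected.subset_left_of_subset_union hΩopen
      isClosed_closure.isOpen_compl (disjoint_compl_right.mono_left subset_closure) hcov
      ⟨z, mem_ball_self hd0, hz⟩
  -- the segment from z to y
  set γ : ℝ → EuclideanSpace ℝ (Fin N) := fun t => z + t • (y - z) with hγdef
  have hγcont : Continuous γ := by
    rw [hγdef]; exact continuous_const.add (continuous_id.smul continuous_const)
  have hdyz : ‖y - z‖ = d := by rw [hdy, dist_eq_norm']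
  have hγdist : ∀ t : ℝ, dist (γ t) z = |t| * d := by
    intro t
    rw [hγdef]
    simp only [dist_eq_norm, add_sub_cancel_left]
    rw [norm_smul, Real.norm_eq_abs, hdyz]
  have hmemΩ : ∀ t ∈ Ico (0:ℝ) 1, γ t ∈ Ω := by
    intro t ht
    apply hball
    rw [mem_ball, hγdist, abs_of_nonneg ht.1]
    calc t * d < 1 * d := mul_lt_mul_of_pos_right ht.2 hd0
      _ = d := one_mul d
  have hγ0 : γ 0 = z := by rw [hγdef]; simp
  have hγ1 : γ 1 = y := by rw [hγdef]; simp
  have hmemc : ∀ t ∈ Icc (0:ℝ) 1, γ t ∈ closure Ω := by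
    intro t ht
    rcases lt_or_eq_of_le ht.2 with h | h
    · exact subset_closure (hmemΩ t ⟨ht.1, h⟩)
    · rw [h, hγ1]; exact frontier_subset_closure hyF
  -- the function g
  set g : ℝ → ℝ := fun t => ψ (γ t) with hgdef
  have hg0 : g 0 = M := by rw [hgdef]; simp only [hγ0, hMdef]
  have hg1 : g 1 = 0 := by rw [hgdef]; simp only [hγ1]; exact hbdry y hyF
  have hgcont : ContinuousOn g (Icc 0 1) := by
    rw [hgdef]
    exact (hψ_C1.continuousOn).comp hγcont.continuousOn hmemc
  have hgle : ∀ t ∈ Icc (0:ℝ) 1, g t ≤ M := fun t ht => hzmax _ (hmemc t ht)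
  have hgpos : ∀ t ∈ Ico (0:ℝ) 1, 0 < g t := fun t ht => hpos _ (hmemΩ t ht)
  -- the last time g equals M
  set S : Set ℝ := Icc 0 1 ∩ g ⁻¹' {M} with hSdef
  have hS0 : (0:ℝ) ∈ S := ⟨⟨le_refl 0, zero_le_one⟩, by simp [hg0]⟩
  have hSclosed : IsClosed S :=
    hgcont.preimage_isClosed_of_isClosed isClosed_Icc isClosed_singleton
  have hSbdd : BddAbove S := bddAbove_Icc.mono inter_subset_left
  set t₀ := sSup S with ht₀def
  have ht₀S : t₀ ∈ S := hSclosed.csSup_mem ⟨0, hS0⟩ hSbdd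
  have ht₀Icc : t₀ ∈ Icc (0:ℝ) 1 := ht₀S.1
  have hgt₀ : g t₀ = M := ht₀S.2
  have ht₀1 : t₀ < 1 :=
    lt_of_le_of_ne ht₀Icc.2 (fun h => by rw [h, hg1] at hgt₀; linarith)
  have hglt : ∀ t, t₀ < t → t ≤ 1 → g t < M := by
    intro t h1 h2
    refine lt_of_le_of_ne (hgle t ⟨le_trans ht₀Icc.1 h1.le, h2⟩) ?_
    intro he
    exact absurd (le_csSup hSbdd ⟨⟨le_trans ht₀Icc.1 h1.le, h2⟩, he⟩) (not_le.mpr h1)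
  -- the comparison function φ
  set φ : ℝ → ℝ := fun t => Real.arccos (g t / M) with hφdef
  set A := Real.sqrt lam * d with hAdef
  have hA0 : 0 ≤ A := mul_nonneg (Real.sqrt_nonneg _) hd0.le
  -- core estimate by the mean value inequality
  have hcore : ∀ a b : ℝ, t₀ < a → a ≤ b → b < 1 → φ b - φ a ≤ A * (b - a) := by
    intro a b ha hab hb1
    have hsub : Icc a b ⊆ Ioo t₀ 1 := fun x hx =>
      ⟨lt_of_lt_of_le ha hx.1, lt_of_le_of_lt hx.2 hb1⟩
    have hderiv : ∀ x ∈ Icc a b, HasDerivAt φ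
        ((-(1 / Real.sqrt (1 - (g x / M) ^ 2))) * (fderiv ℝ ψ (γ x) (y - z) / M)) x := by
      intro x hx
      obtain ⟨hx0, hx1⟩ := hsub hx
      have hxI : x ∈ Ico (0:ℝ) 1 := ⟨le_trans ht₀Icc.1 hx0.le, hx1⟩
      have hxΩ : γ x ∈ Ω := hmemΩ x hxI
      have hψdiff : DifferentiableAt ℝ ψ (γ x) :=
        ((hψ_C1.mono subset_closure).differentiableOn one_ne_zero).differentiableAt
          (hΩopen.mem_nhds hxΩ)
      have hγd : HasDerivAt γ (y - z) x := by
        rw [hγdef]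
        simpa using ((hasDerivAt_id x).smul_const (y - z)).const_add z
      have hgd : HasDerivAt g (fderiv ℝ ψ (γ x) (y - z)) x := by
        rw [hgdef]
        exact hψdiff.hasFDerivAt.comp_hasDerivAt x hγd
      have hu0 : 0 < g x := hgpos x hxI
      have huM : g x < M := hglt x hx0 hx1.le
      have h1 : g x / M ≠ 1 := ne_of_lt ((div_lt_one hM).mpr huM)
      have h2 : g x / M ≠ -1 := by
        have : 0 < g x / M := div_pos hu0 hM
        linarith
      rw [hφdef]
      exact HasDerivAt.comp (h₂ := Real.arccos) (h := fun t => g t / M) x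
        (Real.hasDerivAt_arccos h2 h1) (hgd.div_const M)
    have hbound : ∀ x ∈ Icc a b,
        ‖(-(1 / Real.sqrt (1 - (g x / M) ^ 2))) * (fderiv ℝ ψ (γ x) (y - z) / M)‖ ≤ A := by
      intro x hx
      obtain ⟨hx0, hx1⟩ := hsub hx
      have hxI : x ∈ Ico (0:ℝ) 1 := ⟨le_trans ht₀Icc.1 hx0.le, hx1⟩
      have hu0 : 0 < g x := hgpos x hxI
      have huM : g x < M := hglt x hx0 hx1.le
      have hc2 : (0:ℝ) < 1 - (g x / M) ^ 2 := by
        have h1 : g x / M < 1 := (div_lt_one hM).mpr huM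
        have h0 : 0 < g x / M := div_pos hu0 hM
        nlinarith
      have hc : 0 < Real.sqrt (1 - (g x / M) ^ 2) := Real.sqrt_pos.mpr hc2
      have hs2 : (0:ℝ) < M ^ 2 - g x ^ 2 := by nlinarith
      have hs : 0 < Real.sqrt (M ^ 2 - g x ^ 2) := Real.sqrt_pos.mpr hs2
      have hMc : M * Real.sqrt (1 - (g x / M) ^ 2) = Real.sqrt (M ^ 2 - g x ^ 2) := by
        rw [← Real.sqrt_sq hM.le, ← Real.sqrt_mul (sq_nonneg M)]
        rw [Real.sqrt_sq hM.le]
        congr 1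
        field_simp
      have hxcl : γ x ∈ closure Ω := subset_closure (hmemΩ x hxI)
      have hgradb : ‖gradient ψ (γ x)‖ ≤ Real.sqrt lam * Real.sqrt (M ^ 2 - g x ^ 2) := by
        rw [← Real.sqrt_mul hlam.le]
        refine (Real.le_sqrt (norm_nonneg _) (mul_nonneg hlam.le hs2.le)).mpr ?_
        exact hgrad _ hxcl
      have hinner : fderiv ℝ ψ (γ x) (y - z) = inner ℝ (gradient ψ (γ x)) (y - z) :=
        (InnerProductSpace.toDual_symm_apply).symm
      have hfd : |fderiv ℝ ψ (γ x) (y - z)| ≤ Real.sqrt lam * Real.sqrt (M ^ 2 - g x ^ 2) * d := by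
        rw [hinner]
        calc |(inner ℝ (gradient ψ (γ x)) (y - z) : ℝ)|
            ≤ ‖gradient ψ (γ x)‖ * ‖y - z‖ := abs_real_inner_le_norm _ _
          _ ≤ Real.sqrt lam * Real.sqrt (M ^ 2 - g x ^ 2) * ‖y - z‖ :=
              mul_le_mul_of_nonneg_right hgradb (norm_nonneg _)
          _ = Real.sqrt lam * Real.sqrt (M ^ 2 - g x ^ 2) * d := by rw [hdyz]
      have h3 : (-(1 / Real.sqrt (1 - (g x / M) ^ 2))) * (fderiv ℝ ψ (γ x) (y - z) / M)
          = -(fderiv ℝ ψ (γ x) (y - z) / (M * Real.sqrt (1 - (g x / M) ^ 2))) := by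
        field_simp
      rw [Real.norm_eq_abs, h3, abs_neg, abs_div, abs_of_pos (mul_pos hM hc), hMc,
        div_le_iff₀ hs]
      calc |fderiv ℝ ψ (γ x) (y - z)|
          ≤ Real.sqrt lam * Real.sqrt (M ^ 2 - g x ^ 2) * d := hfd
        _ = A * Real.sqrt (M ^ 2 - g x ^ 2) := by rw [hAdef]; ring
    have key := (convex_Icc a b).norm_image_sub_le_of_norm_hasDerivWithin_le
      (fun x hx => (hderiv x hx).hasDerivWithinAt) hbound
      (left_mem_Icc.mpr hab) (right_mem_Icc.mpr hab)
    rw [Real.norm_eq_abs, Real.norm_eq_abs, abs_of_nonneg (sub_nonneg.mpr hab)] at key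
    exact le_trans (le_abs_self _) key
  -- continuity of φ
  have hφcont : ContinuousOn φ (Icc 0 1) := by
    rw [hφdef]
    exact Real.continuous_arccos.comp_continuousOn (hgcont.div_const M)
  -- limit as b → 1
  have hstepA : ∀ a, t₀ < a → a < 1 → φ 1 - φ a ≤ A * (1 - a) := by
    intro a ha ha1
    have ha0 : (0:ℝ) ≤ a := le_trans ht₀Icc.1 ha.le
    have hne : (𝓝[Ioo a 1] (1:ℝ)).NeBot := by
      rw [← mem_closure_iff_nhdsWithin_neBot, closure_Ioo (ne_of_lt ha1)]
      exact ⟨ha1.le, le_refl 1⟩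
    have hsub2 : Ioo a 1 ⊆ Icc (0:ℝ) 1 := fun x hx => ⟨le_trans ha0 hx.1.le, hx.2.le⟩
    refine le_of_tendsto_of_tendsto (b := 𝓝[Ioo a 1] (1:ℝ))
      (f := fun b => φ b - φ a) (g := fun b => A * (b - a)) ?_ ?_ ?_
    · exact Filter.Tendsto.sub_const ((hφcont 1 (right_mem_Icc.mpr zero_le_one)).mono hsub2) (φ a)
    · exact ((continuous_const.mul (continuous_id.sub continuous_const)).tendsto 1).mono_left
        nhdsWithin_le_nhds
    · exact eventually_mem_nhdsWithin.mono (fun b hb => hcore a b ha hb.1.le hb.2)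
  -- limit as a → t₀
  have hstepB : φ 1 - φ t₀ ≤ A * (1 - t₀) := by
    have hne : (𝓝[Ioo t₀ 1] t₀).NeBot := by
      rw [← mem_closure_iff_nhdsWithin_neBot, closure_Ioo (ne_of_lt ht₀1)]
      exact ⟨le_refl _, ht₀1.le⟩
    have hsub2 : Ioo t₀ 1 ⊆ Icc (0:ℝ) 1 := fun x hx =>
      ⟨le_trans ht₀Icc.1 hx.1.le, hx.2.le⟩
    refine le_of_tendsto_of_tendsto (b := 𝓝[Ioo t₀ 1] t₀)
      (f := fun a => φ 1 - φ a) (g := fun a => A * (1 - a)) ?_ ?_ ?_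
    · exact tendsto_const_nhds.sub ((hφcont t₀ ht₀Icc).mono hsub2)
    · exact ((continuous_const.mul (continuous_const.sub continuous_id)).tendsto t₀).mono_left
        nhdsWithin_le_nhds
    · exact eventually_mem_nhdsWithin.mono (fun a haI => hstepA a haI.1 haI.2)
  have hφt₀ : φ t₀ = 0 := by
    rw [hφdef]
    simp [hgt₀, div_self hM.ne']
  have hφ1 : φ 1 = Real.pi / 2 := by
    rw [hφdef]
    simp [hg1]
  have hfin : Real.pi / 2 ≤ A := by
    have h1 : Real.pi / 2 ≤ A * (1 - t₀) := by
      have := hstepB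
      rw [hφ1, hφt₀] at this
      linarith
    have h2 : A * (1 - t₀) ≤ A * 1 := mul_le_mul_of_nonneg_left (by linarith [ht₀Icc.1]) hA0
    linarith
  have hsl : 0 < Real.sqrt lam := Real.sqrt_pos.mpr hlam
  rw [ge_iff_le, div_le_iff₀ (mul_pos two_pos hsl)]
  rw [hAdef] at hfin
  nlinarith [hfin]
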